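/- Let (g_i) be the standard basis of ℝ^{n-1} and let 𝒢 = { ∑_{k=i}^{j-1} g_k : 1 ≤ i ≤ j-1 ≤ n-1 } be the set of 'consecutive sums'. Define ‖·‖_♮ to be the norm whose unit ball is the convex hull of { ±θ : θ ∈ 𝒢 } (the smallest balanced convex body containing 𝒢). Then ‖θ‖_♮ ≥ ‖θ‖_♭ for all θ ∈ ℝ^{n-1}, and ‖θ‖_♮ = ‖θ‖_♭ = 1 for every θ ∈ 𝒢. -/

import Mathlib

/-- The flat norm `‖x‖_♭` on `ℝ^m`. -/
noncomputable def flatNorm {m : ℕ} (x : Fin m → ℝ) : ℝ :=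
  (⨆ i, max (x i) 0) + ⨆ i, max (-x i) 0

/-- The set `𝒢` of consecutive sums `∑_{k=i}^{j} g_k` of standard basis
vectors of `ℝ^m`. -/
def consecSums (m : ℕ) : Set (Fin m → ℝ) :=
  {θ | ∃ i j : Fin m, i ≤ j ∧ θ = fun l => if i ≤ l ∧ l ≤ j then (1 : ℝ) else 0}

/-- The natural norm `‖·‖_♮`: the gauge of the convex hull of `𝒢 ∪ (-𝒢)`. -/
noncomputable def natNorm {m : ℕ} (x : Fin m → ℝ) : ℝ :=
  gauge (convexHull ℝ (consecSums m ∪ -consecSums m)) x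

namespace FlatAux

open Pointwise

variable {m : ℕ}

lemma posPart_le (x : Fin m → ℝ) (i : Fin m) :
    max (x i) 0 ≤ ⨆ j, max (x j) 0 :=
  le_ciSup (f := fun j => max (x j) 0) (Set.Finite.bddAbove (Set.finite_range _)) i

lemma max_add_max_neg (a : ℝ) : max a 0 + max (-a) 0 = |a| := by
  rcases le_total a 0 with h | h
  · rw [max_eq_right h, max_eq_left (neg_nonneg.2 h), abs_of_nonpos h, zero_add]
  · rw [max_eq_left h, max_eq_right (neg_nonpos.2 h), abs_of_nonneg h, add_zero]

lemma max_sub_max_neg (a : ℝ) : max a 0 - max (-a) 0 = a := by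
  rcases le_total a 0 with h | h
  · rw [max_eq_right h, max_eq_left (neg_nonneg.2 h), zero_sub, neg_neg]
  · rw [max_eq_left h, max_eq_right (neg_nonpos.2 h), sub_zero]

lemma flatNorm_nonneg (x : Fin m → ℝ) : 0 ≤ flatNorm x := by
  cases isEmpty_or_nonempty (Fin m) with
  | inl h => simp [flatNorm, Real.iSup_of_isEmpty]
  | inr h =>
    have i := Classical.arbitrary (Fin m)
    have h1 : (0:ℝ) ≤ ⨆ j, max (x j) 0 := le_trans (le_max_right _ _) (posPart_le x i)
    have h2 : (0:ℝ) ≤ ⨆ j, max (-x j) 0 :=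
      le_trans (le_max_right _ _) (posPart_le (fun j => -x j) i)
    exact add_nonneg h1 h2

lemma flatNorm_neg (x : Fin m → ℝ) : flatNorm (-x) = flatNorm x := by
  simp only [flatNorm, Pi.neg_apply, neg_neg]
  exact add_comm _ _

lemma sup_add_le [Nonempty (Fin m)] (x y : Fin m → ℝ) :
    (⨆ i, max (x i + y i) 0) ≤ (⨆ i, max (x i) 0) + ⨆ i, max (y i) 0 :=
  ciSup_le fun i =>
    le_trans
      (max_le (add_le_add (le_max_left _ _) (le_max_left _ _))
        (add_nonneg (le_max_right _ _) (le_max_right _ _)))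
      (add_le_add (posPart_le x i) (posPart_le y i))

lemma flatNorm_add (x y : Fin m → ℝ) : flatNorm (x + y) ≤ flatNorm x + flatNorm y := by
  cases isEmpty_or_nonempty (Fin m) with
  | inl h =>
    simp only [flatNorm, Real.iSup_of_isEmpty, add_zero]
    norm_num
  | inr h =>
    have h1 : (⨆ i, max ((x + y) i) 0) ≤ (⨆ i, max (x i) 0) + ⨆ i, max (y i) 0 :=
      sup_add_le x y
    have h2 : (⨆ i, max (-(x + y) i) 0) ≤ (⨆ i, max (-x i) 0) + ⨆ i, max (-y i) 0 := by
      have := sup_add_le (fun i => -x i) (fun i => -y i)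
      simpa [neg_add_rev, add_comm] using this
    calc flatNorm (x + y) ≤ ((⨆ i, max (x i) 0) + ⨆ i, max (y i) 0) +
        ((⨆ i, max (-x i) 0) + ⨆ i, max (-y i) 0) := add_le_add h1 h2
      _ = flatNorm x + flatNorm y := by simp only [flatNorm]; ring

lemma flatNorm_smul {r : ℝ} (hr : 0 ≤ r) (x : Fin m → ℝ) :
    flatNorm (r • x) = r * flatNorm x := by
  simp only [flatNorm, Pi.smul_apply, smul_eq_mul, mul_add]
  rw [Real.mul_iSup_of_nonneg hr, Real.mul_iSup_of_nonneg hr]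
  congr 1
  · exact iSup_congr fun i => by rw [mul_max_of_nonneg _ _ hr, mul_zero]
  · exact iSup_congr fun i => by
      rw [mul_max_of_nonneg _ _ hr, mul_zero, ← neg_mul_eq_mul_neg]

lemma flatNorm_consec {θ : Fin m → ℝ} (h : θ ∈ consecSums m) : flatNorm θ = 1 := by
  obtain ⟨i, j, hij, rfl⟩ := h
  haveI : Nonempty (Fin m) := ⟨i⟩
  have hpos : (⨆ l, max ((if i ≤ l ∧ l ≤ j then (1:ℝ) else 0)) 0) = 1 := by
    apply le_antisymm
    · exact ciSup_le fun l => by split_ifs <;> norm_num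
    · have := posPart_le (fun l => if i ≤ l ∧ l ≤ j then (1:ℝ) else 0) i
      simpa [le_refl, hij] using this
  have hneg : (⨆ l, max (-(if i ≤ l ∧ l ≤ j then (1:ℝ) else 0)) 0) = 0 := by
    have hz : ∀ l : Fin m, max (-(if i ≤ l ∧ l ≤ j then (1:ℝ) else 0)) 0 = 0 :=
      fun l => by split_ifs <;> norm_num
    rw [iSup_congr hz]
    exact ciSup_const
  simp only [flatNorm]
  rw [hpos, hneg, add_zero]

lemma flatNorm_le_one_on_hull {y : Fin m → ℝ}
    (hy : y ∈ convexHull ℝ (consecSums m ∪ -consecSums m)) : flatNorm y ≤ 1 := by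
  have hsub : convexHull ℝ (consecSums m ∪ -consecSums m) ⊆ {z | flatNorm z ≤ 1} := by
    apply convexHull_min
    · rintro z (hz | hz)
      · exact le_of_eq (flatNorm_consec hz)
      · rw [Set.mem_neg] at hz
        have h1 : flatNorm z = 1 := by
          rw [← neg_neg z, flatNorm_neg]
          exact flatNorm_consec hz
        exact le_of_eq h1
    · intro a ha b hb s t hs ht hst
      simp only [Set.mem_setOf_eq] at ha hb ⊢
      calc flatNorm (s • a + t • b) ≤ flatNorm (s • a) + flatNorm (t • b) := flatNorm_add _ _
        _ = s * flatNorm a + t * flatNorm b := by rw [flatNorm_smul hs, flatNorm_smul ht]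
        _ ≤ s * 1 + t * 1 := add_le_add (mul_le_mul_of_nonneg_left ha hs)
            (mul_le_mul_of_nonneg_left hb ht)
        _ = 1 := by rw [mul_one, mul_one, hst]
  exact hsub hy

/-- the single basis vectors, as members of `consecSums`. -/
def ee (i : Fin m) : Fin m → ℝ := fun l => if i ≤ l ∧ l ≤ i then (1:ℝ) else 0

lemma ee_mem (i : Fin m) : ee i ∈ consecSums m := ⟨i, i, le_refl _, rfl⟩

lemma ee_apply (i l : Fin m) : ee i l = if l = i then (1:ℝ) else 0 := by
  unfold ee
  by_cases h : l = i
  · simp [h]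
  · have : ¬(i ≤ l ∧ l ≤ i) := fun hc => h (le_antisymm hc.2 hc.1)
    simp [h, this]

lemma exists_scale [Nonempty (Fin m)] (x : Fin m → ℝ) :
    ∃ r : ℝ, 0 < r ∧ x ∈ r • convexHull ℝ (consecSums m ∪ -consecSums m) := by
  set S := convexHull ℝ (consecSums m ∪ -consecSums m) with hS
  have hSconv : Convex ℝ S := convex_convexHull ℝ _
  have heS : ∀ i : Fin m, ee i ∈ S := fun i => subset_convexHull ℝ _ (Or.inl (ee_mem i))
  have hneS : ∀ i : Fin m, -(ee i) ∈ S := fun i =>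
    subset_convexHull ℝ _ (Or.inr (Set.neg_mem_neg.2 (ee_mem i)))
  have h0 : (0 : Fin m → ℝ) ∈ S := by
    have i := Classical.arbitrary (Fin m)
    have := hSconv (heS i) (hneS i) (by norm_num : (0:ℝ) ≤ 1/2)
      (by norm_num : (0:ℝ) ≤ 1/2) (by norm_num)
    rwa [smul_neg, add_neg_cancel] at this
  set r : ℝ := (∑ i, |x i|) + 1 with hrdef
  have hsum_nonneg : (0:ℝ) ≤ ∑ i, |x i| := Finset.sum_nonneg fun i _ => abs_nonneg _
  have hr : 0 < r := by positivity
  refine ⟨r, hr, ?_⟩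
  rw [Set.mem_smul_set_iff_inv_smul_mem₀ (ne_of_gt hr)]
  -- write `r⁻¹ • x` as a convex combination of `ee i`, `-(ee i)` and `0`
  set w : (Fin m ⊕ Fin m) ⊕ Unit → ℝ := Sum.elim (Sum.elim (fun i => max (x i) 0 / r) (fun i => max (-x i) 0 / r))
    (fun _ => 1 - (∑ i, |x i|) / r) with hw
  set z : (Fin m ⊕ Fin m) ⊕ Unit → (Fin m → ℝ) := Sum.elim (Sum.elim ee (fun i => -(ee i))) (fun _ => 0) with hz
  have habs : (∑ i, max (x i) 0 / r) + ∑ i, max (-x i) 0 / r = (∑ i, |x i|) / r := by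
    rw [← Finset.sum_add_distrib, Finset.sum_div]
    exact Finset.sum_congr rfl fun i _ => by
      rw [← add_div, max_add_max_neg]
  have hwsum : ∑ a : (Fin m ⊕ Fin m) ⊕ Unit, w a = 1 := by
    rw [Fintype.sum_sum_type, Fintype.sum_sum_type]
    simp only [hw, Sum.elim_inl, Sum.elim_inr, Finset.sum_const, Finset.card_univ,
      Fintype.card_unit, one_smul]
    linarith [habs]
  have hw0 : ∀ a : (Fin m ⊕ Fin m) ⊕ Unit, 0 ≤ w a := by
    rintro ((i | i) | u) <;> simp only [hw, Sum.elim_inl, Sum.elim_inr]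
    · positivity
    · positivity
    · rw [sub_nonneg, div_le_one hr, hrdef]
      linarith
  have hz_mem : ∀ a : (Fin m ⊕ Fin m) ⊕ Unit, z a ∈ S := by
    rintro ((i | i) | u)
    · exact heS i
    · exact hneS i
    · exact h0
  have hkey : ∑ a : (Fin m ⊕ Fin m) ⊕ Unit, w a • z a = r⁻¹ • x := by
    funext l
    rw [Finset.sum_apply]
    simp only [Pi.smul_apply, smul_eq_mul]
    rw [Fintype.sum_sum_type, Fintype.sum_sum_type]
    simp only [hw, hz, Sum.elim_inl, Sum.elim_inr, Pi.neg_apply, Pi.zero_apply, mul_zero,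
      Finset.sum_const, Finset.card_univ, Fintype.card_unit, one_smul, smul_eq_mul, ee_apply]
    simp only [mul_neg, mul_ite, mul_one, mul_zero, Finset.sum_neg_distrib,
      Finset.sum_ite_eq, Finset.mem_univ, if_true, add_zero]
    rw [← sub_eq_add_neg, div_sub_div_same, max_sub_max_neg, div_eq_inv_mul]
  rw [← hkey]
  exact hSconv.sum_mem (fun a _ => hw0 a) hwsum (fun a _ => hz_mem a)

lemma flatNorm_le_natNorm (x : Fin m → ℝ) : flatNorm x ≤ natNorm x := by
  cases isEmpty_or_nonempty (Fin m) with
  | inl h =>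
    have : flatNorm x = 0 := by simp [flatNorm, Real.iSup_of_isEmpty]
    rw [this]
    exact gauge_nonneg x
  | inr h =>
    rw [natNorm, gauge]
    refine le_csInf ?_ ?_
    · obtain ⟨r, hr, hx⟩ := exists_scale x
      exact ⟨r, hr, hx⟩
    · rintro r ⟨hr, hmem⟩
      obtain ⟨y, hy, rfl⟩ := hmem
      rw [flatNorm_smul (le_of_lt hr)]
      calc r * flatNorm y ≤ r * 1 :=
          mul_le_mul_of_nonneg_left (flatNorm_le_one_on_hull hy) (le_of_lt hr)
        _ = r := mul_one r

lemma natNorm_consec {θ : Fin m → ℝ} (h : θ ∈ consecSums m) : natNorm θ = 1 := by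
  apply le_antisymm
  · exact gauge_le_one_of_mem (subset_convexHull ℝ _ (Or.inl h))
  · calc (1:ℝ) = flatNorm θ := (flatNorm_consec h).symm
      _ ≤ natNorm θ := flatNorm_le_natNorm θ

end FlatAux

/-- `‖θ‖_♮ ≥ ‖θ‖_♭` for all `θ`, and `‖θ‖_♮ = ‖θ‖_♭ = 1` on consecutive sums. -/
theorem natNorm_ge_flatNorm_and_eq_on_consec (m : ℕ) :
    (∀ θ : Fin m → ℝ, flatNorm θ ≤ natNorm θ) ∧
    (∀ θ ∈ consecSums m, natNorm θ = 1 ∧ flatNorm θ = 1) := by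
  exact ⟨FlatAux.flatNorm_le_natNorm,
    fun θ hθ => ⟨FlatAux.natNorm_consec hθ, FlatAux.flatNorm_consec hθ⟩⟩
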